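/- Let {W(ω) : ω ∈ Ω*} be a finite family of m×m doubly stochastic matrices such that the second smallest (by real part) eigenvalue of Σ_{ω∈Ω*}(I_m − W(ω)) has positive real part. Then the set of common fixed points {x ∈ ℝ^{mn} : (W(ω) ⊗ Iₙ)x = x for all ω ∈ Ω*} equals the consensus subspace C = {x : x₁ = ⋯ = x_m}. -/

import Mathlib

open Filter Set RealInnerProductSpace

noncomputable def fenchel {n : ℕ} (f : EuclideanSpace ℝ (Fin n) → ℝ)
    (y : EuclideanSpace ℝ (Fin n)) : ℝ :=
  sSup (Set.range fun x => ⟪y, x⟫ - f x)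

def Coercive1 {n : ℕ} (f : EuclideanSpace ℝ (Fin n) → ℝ) : Prop :=
  Tendsto (fun x => f x / ‖x‖) (Filter.comap norm Filter.atTop) Filter.atTop

def DoublyStochastic {m : ℕ} (W : Matrix (Fin m) (Fin m) ℝ) : Prop :=
  (∀ i j, 0 ≤ W i j) ∧ (∀ i, ∑ j, W i j = 1) ∧ (∀ j, ∑ i, W i j = 1)

theorem stmt13 {n m : ℕ} {Ω : Type*} [Fintype Ω]
    (W : Ω → Matrix (Fin m) (Fin m) ℝ) (hW : ∀ ω, DoublyStochastic (W ω))
    (hlam2 : ∀ (μ : ℂ) (v : Fin m → ℂ), v ≠ 0 →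
      ((∑ ω, ((1 : Matrix (Fin m) (Fin m) ℝ) - W ω)).map (fun a => (a : ℂ))).mulVec v = μ • v →
      μ.re ≤ 0 → ∃ c : ℂ, v = fun _ => c) :
    {x : Fin m → EuclideanSpace ℝ (Fin n) | ∀ ω i, ∑ j, W ω i j • x j = x i}
      = {x : Fin m → EuclideanSpace ℝ (Fin n) | ∀ i j, x i = x j} := by
  ext x
  simp only [Set.mem_setOf_eq]
  constructor
  · intro hx i j
    ext k
    -- coordinatewise fixed-point equations
    have hcoord : ∀ ω i, ∑ j, W ω i j * x j k = x i k := by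
      intro ω i
      have h := congrArg (fun y : EuclideanSpace ℝ (Fin n) => y k) (hx ω i)
      simp only at h
      rw [WithLp.ofLp_sum, Finset.sum_apply k Finset.univ (fun j => (W ω i j • x j).ofLp)] at h
      simpa [smul_eq_mul] using h
    by_cases hv0 : (fun i => ((x i k : ℝ) : ℂ)) = (0 : Fin m → ℂ)
    · have hi : ((x i k : ℝ) : ℂ) = 0 := congrFun hv0 i
      have hj : ((x j k : ℝ) : ℂ) = 0 := congrFun hv0 j
      have : (x i k : ℂ) = (x j k : ℂ) := by rw [hi, hj]
      exact_mod_cast this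
    · have hreal : ∀ i, ∑ j, (∑ ω, ((1 : Matrix (Fin m) (Fin m) ℝ) - W ω)) i j * x j k = 0 := by
        intro i
        have hsa : ∀ j', (∑ ω, ((1 : Matrix (Fin m) (Fin m) ℝ) - W ω)) i j'
            = ∑ ω, ((1 : Matrix (Fin m) (Fin m) ℝ) i j' - W ω i j') := by
          intro j'
          simp [Matrix.sum_apply, Matrix.sub_apply]
        simp only [hsa, Finset.sum_mul]
        rw [Finset.sum_comm]
        apply Finset.sum_eq_zero
        intro ω _
        have h1 : ∑ j', (1 : Matrix (Fin m) (Fin m) ℝ) i j' * x j' k = x i k := by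
          simp [Matrix.one_apply]
        calc ∑ j', ((1 : Matrix (Fin m) (Fin m) ℝ) i j' - W ω i j') * x j' k
            = ∑ j', ((1 : Matrix (Fin m) (Fin m) ℝ) i j' * x j' k - W ω i j' * x j' k) := by
              simp [sub_mul]
          _ = (∑ j', (1 : Matrix (Fin m) (Fin m) ℝ) i j' * x j' k)
              - ∑ j', W ω i j' * x j' k := Finset.sum_sub_distrib _ _
          _ = x i k - x i k := by rw [h1, hcoord ω i]
          _ = 0 := sub_self _
      have hmv : ((∑ ω, ((1 : Matrix (Fin m) (Fin m) ℝ) - W ω)).map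
          (fun a => (a : ℂ))).mulVec (fun i => ((x i k : ℝ) : ℂ)) = (0 : ℂ) • (fun i => ((x i k : ℝ) : ℂ)) := by
        funext i
        simp only [Matrix.mulVec, dotProduct, Matrix.map_apply,
          zero_smul, Pi.zero_apply]
        have : ∑ j', ((((∑ ω, ((1 : Matrix (Fin m) (Fin m) ℝ) - W ω)) i j' : ℝ) : ℂ))
            * ((x j' k : ℝ) : ℂ)
            = (((∑ j', (∑ ω, ((1 : Matrix (Fin m) (Fin m) ℝ) - W ω)) i j' * x j' k : ℝ)) : ℂ) := by
          push_cast; rfl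
        rw [this, hreal i, Complex.ofReal_zero]
      obtain ⟨c, hc⟩ := hlam2 0 _ hv0 hmv (by norm_num)
      have hi : ((x i k : ℝ) : ℂ) = c := congrFun hc i
      have hj : ((x j k : ℝ) : ℂ) = c := congrFun hc j
      have : (x i k : ℂ) = (x j k : ℂ) := by rw [hi, hj]
      exact_mod_cast this
  · intro hx ω i
    have hxx : ∀ j, x j = x i := fun j => hx j i
    calc ∑ j, W ω i j • x j = ∑ j, W ω i j • x i := by
          exact Finset.sum_congr rfl fun j _ => by rw [hxx j]
      _ = (∑ j, W ω i j) • x i := (Finset.sum_smul).symm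
      _ = x i := by rw [(hW ω).2.1 i, one_smul]
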